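/- arXiv:1110.6347 — 6 statements merged into one kernel-verified Lean document; each statement's English description precedes it below -/
import Mathlib

section
/- Let n ≥ 1, C > 0 and d > 0. If A is an n×n real symmetric positive definite matrix with |A i j| ≤ C for all i, j and det A ≥ d, then every vector v ∈ ℝⁿ with vᵀ A v ≤ 1 satisfies ‖v‖² ≤ n! · C^(n−1) / d (Euclidean norm). -/
open Matrix

/-- If `A` is a symmetric positive definite `n × n` real matrix with entries bounded by `C`
and `det A ≥ d > 0`, then every vector `v` with `vᵀ A v ≤ 1` has Euclidean norm squared
at most `n! · C^(n-1) / d`. -/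
theorem unit_vectors_bound (n : ℕ) (hn : 1 ≤ n) (C d : ℝ) (hC : 0 < C) (hd : 0 < d)
    (A : Matrix (Fin n) (Fin n) ℝ)
    (hsymm : A.IsSymm) (hpos : A.PosDef)
    (hA : ∀ i j, |A i j| ≤ C) (hdet : d ≤ A.det)
    (v : Fin n → ℝ) (hv : v ⬝ᵥ A.mulVec v ≤ 1) :
    ∑ i, (v i) ^ 2 ≤ (Nat.factorial n : ℝ) * C ^ (n - 1) / d := by
  obtain ⟨m, rfl⟩ : ∃ m, n = m + 1 := ⟨n - 1, (Nat.succ_pred_eq_of_pos hn).symm⟩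
  set B : Matrix (Fin (m + 1)) (Fin (m + 1)) ℝ := A⁻¹ with hB
  have hdetpos : 0 < A.det := lt_of_lt_of_le hd hdet
  have hdu : IsUnit A.det := isUnit_iff_ne_zero.mpr hdetpos.ne'
  have hBA : B * A = 1 := A.nonsing_inv_mul hdu
  have hBAv : B *ᵥ (A *ᵥ v) = v := by rw [mulVec_mulVec, hBA, one_mulVec]
  have hBpsd : B.PosSemidef := (hpos.inv).posSemidef
  obtain ⟨S, hS⟩ : ∃ S : Matrix (Fin (m + 1)) (Fin (m + 1)) ℝ, B = star S * S := by
    open scoped MatrixOrder in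
    exact CStarAlgebra.nonneg_iff_eq_star_mul_self.mp hBpsd.nonneg
  have hS' : B = Sᵀ * S := by
    rw [hS]; congr 1
  -- key dot product identity
  have key : ∀ w u : Fin (m + 1) → ℝ, w ⬝ᵥ (B *ᵥ u) = (S *ᵥ w) ⬝ᵥ (S *ᵥ u) := by
    intro w u
    rw [hS', ← mulVec_mulVec, dotProduct_mulVec w Sᵀ, vecMul_transpose]
  -- the trace bound
  set K : ℝ := (Nat.factorial (m + 1) : ℝ) * C ^ m / d with hK
  have hKpos : 0 < K := by
    apply div_pos _ hd
    positivity
  have htrace : ∑ i, B i i ≤ K := by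
    have hent : ∀ i : Fin (m + 1), B i i ≤ (Nat.factorial m : ℝ) * C ^ m / d := by
      intro i
      have hadj : A.adjugate i i = (A.submatrix i.succAbove i.succAbove).det := by
        rw [adjugate_fin_succ_eq_det_submatrix]
        have h0 : (-1 : ℝ) ^ ((i : ℕ) + (i : ℕ)) = 1 := Even.neg_one_pow ⟨(i : ℕ), rfl⟩
        rw [h0, one_mul]
      have hsub : |(A.submatrix i.succAbove i.succAbove).det| ≤ (Nat.factorial m : ℝ) * C ^ m := by
        have := Matrix.det_le (A := A.submatrix i.succAbove i.succAbove)
          (abv := (AbsoluteValue.abs : AbsoluteValue ℝ ℝ)) (x := C) (fun a b => hA _ _)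
        simpa [Fintype.card_fin, nsmul_eq_mul] using this
      have hBii : B i i = (A.det)⁻¹ * A.adjugate i i := by
        rw [hB, Matrix.inv_def, Ring.inverse_eq_inv']
        simp [Matrix.smul_apply]
      rw [hBii, hadj]
      have h1 : (A.det)⁻¹ * (A.submatrix i.succAbove i.succAbove).det
          ≤ (A.det)⁻¹ * ((Nat.factorial m : ℝ) * C ^ m) := by
        apply mul_le_mul_of_nonneg_left _ (inv_nonneg.mpr hdetpos.le)
        exact le_trans (le_abs_self _) hsub
      have h2 : (A.det)⁻¹ ≤ d⁻¹ := inv_anti₀ hd hdet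
      calc (A.det)⁻¹ * (A.submatrix i.succAbove i.succAbove).det
          ≤ (A.det)⁻¹ * ((Nat.factorial m : ℝ) * C ^ m) := h1
        _ ≤ d⁻¹ * ((Nat.factorial m : ℝ) * C ^ m) :=
            mul_le_mul_of_nonneg_right h2 (by positivity)
        _ = (Nat.factorial m : ℝ) * C ^ m / d := by ring
    calc ∑ i, B i i ≤ ∑ _i : Fin (m + 1), (Nat.factorial m : ℝ) * C ^ m / d :=
          Finset.sum_le_sum fun i _ => hent i
      _ = (m + 1 : ℝ) * ((Nat.factorial m : ℝ) * C ^ m / d) := by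
          simp [Finset.sum_const, mul_comm]
      _ = K := by
          rw [hK, Nat.factorial_succ]
          push_cast
          ring
  -- Cauchy-Schwarz chain
  set s : ℝ := ∑ i, (v i) ^ 2 with hs
  have hs0 : 0 ≤ s := Finset.sum_nonneg fun i _ => sq_nonneg _
  have hvv : v ⬝ᵥ v = s := by simp [dotProduct, hs, sq]
  have step1 : s = (S *ᵥ v) ⬝ᵥ (S *ᵥ (A *ᵥ v)) := by
    rw [← key v (A *ᵥ v), hBAv, hvv]
  have hBvv : v ⬝ᵥ (B *ᵥ v) ≤ (∑ i, ∑ j, (S i j) ^ 2) * s := by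
    rw [key v v]
    have : (S *ᵥ v) ⬝ᵥ (S *ᵥ v) = ∑ i, (S *ᵥ v) i ^ 2 := by simp [dotProduct, sq]
    rw [this]
    calc ∑ i, (S *ᵥ v) i ^ 2 ≤ ∑ i, (∑ j, (S i j) ^ 2) * s := by
          apply Finset.sum_le_sum
          intro i _
          have := Finset.sum_mul_sq_le_sq_mul_sq Finset.univ (fun j => S i j) v
          simpa [mulVec, dotProduct, hs] using this
      _ = (∑ i, ∑ j, (S i j) ^ 2) * s := by rw [← Finset.sum_mul]
  have hSB : (∑ i, ∑ j, (S i j) ^ 2) = ∑ i, B i i := by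
    rw [Finset.sum_comm]
    apply Finset.sum_congr rfl
    intro j _
    rw [hS']
    simp [Matrix.mul_apply, sq]
  have hAvBv : (A *ᵥ v) ⬝ᵥ (B *ᵥ (A *ᵥ v)) ≤ 1 := by
    rw [hBAv, dotProduct_comm]; exact hv
  have cs : s ^ 2 ≤ (K * s) * 1 := by
    have h1 : s ^ 2 ≤ (v ⬝ᵥ (B *ᵥ v)) * ((A *ᵥ v) ⬝ᵥ (B *ᵥ (A *ᵥ v))) := by
      rw [step1, key v v, key (A *ᵥ v) (A *ᵥ v)]
      have := Finset.sum_mul_sq_le_sq_mul_sq Finset.univ (S *ᵥ v) (S *ᵥ (A *ᵥ v))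
      simpa [dotProduct, sq] using this
    have h2 : 0 ≤ (A *ᵥ v) ⬝ᵥ (B *ᵥ (A *ᵥ v)) := by
      rw [key (A *ᵥ v) (A *ᵥ v)]
      simp only [dotProduct]
      exact Finset.sum_nonneg fun i _ => mul_self_nonneg _
    have h3 : 0 ≤ v ⬝ᵥ (B *ᵥ v) := by
      rw [key v v]; exact Finset.sum_nonneg fun i _ => mul_self_nonneg _
    calc s ^ 2 ≤ (v ⬝ᵥ (B *ᵥ v)) * ((A *ᵥ v) ⬝ᵥ (B *ᵥ (A *ᵥ v))) := h1
      _ ≤ (K * s) * 1 := by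
          apply mul_le_mul (hBvv.trans (by rw [hSB]; exact mul_le_mul_of_nonneg_right htrace hs0))
            hAvBv h2 (by positivity)
  have : s ≤ K := by nlinarith [hKpos, hs0]
  simpa [hK] using this
end

section
/- Let n ≥ 1, C > 0, d > 0. Then there exists K > 0, depending only on n, C and d, with the following property. Let U ⊆ ℝⁿ be open and let g : U → Mₙ(ℝ) be a C¹ map whose values are symmetric positive definite matrices, such that for all x ∈ U: |g(x) i j| ≤ C for all i, j, every first-order partial derivative of every entry of g at x has absolute value at most C, and det g(x) ≥ d. Define the Christoffel symbols Γ^r_{st}(x) = (1/2) Σ_{l=1}^{n} (g(x)⁻¹)_{rl} (∂_s g(x)_{lt} + ∂_t g(x)_{ls} − ∂_l g(x)_{st}). Let x : J → U be a C² curve on an interval J ⊆ ℝ which is a unit-speed geodesic of g, i.e. x'(t)ᵀ g(x(t)) x'(t) = 1 for all t ∈ J and x''_i(t) = − Σ_{s,t'=1}^{n} Γ^i_{st'}(x(t)) · x'_s(t) · x'_{t'}(t) for all t ∈ J and all i. Then ‖x'(t)‖ ≤ K and ‖x''(t)‖ ≤ K for all t ∈ J (Euclidean norms). -/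
open Matrix

/-- The partial derivative, in the `l`-th coordinate direction, of the `(i,j)` entry of a
matrix-valued map `g` at the point `x`. -/
noncomputable def partialEntry (n : ℕ) (g : (Fin n → ℝ) → Matrix (Fin n) (Fin n) ℝ)
    (i j l : Fin n) (x : Fin n → ℝ) : ℝ :=
  fderiv ℝ (fun y => g y i j) x (Pi.single l 1)

/-- The Christoffel symbols `Γ^r_{st}` of the metric `g` at the point `x`. -/
noncomputable def christoffel (n : ℕ) (g : (Fin n → ℝ) → Matrix (Fin n) (Fin n) ℝ)
    (r s t : Fin n) (x : Fin n → ℝ) : ℝ :=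
  (1 / 2) * ∑ l, (g x)⁻¹ r l *
    (partialEntry n g l t s x + partialEntry n g l s t x - partialEntry n g s t l x)


-- symmetry of quadratic form
lemma dot_symm {n : ℕ} (M : Matrix (Fin n) (Fin n) ℝ) (hs : Mᵀ = M) (a b : Fin n → ℝ) :
    a ⬝ᵥ M.mulVec b = b ⬝ᵥ M.mulVec a := by
  rw [dotProduct_mulVec, ← mulVec_transpose, hs, dotProduct_comm]

-- Cauchy-Schwarz for nonneg quadratic form
lemma cs {n : ℕ} (M : Matrix (Fin n) (Fin n) ℝ) (hs : Mᵀ = M)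
    (hpos : ∀ v : Fin n → ℝ, 0 ≤ v ⬝ᵥ M.mulVec v) (a b : Fin n → ℝ) :
    (a ⬝ᵥ M.mulVec b) ^ 2 ≤ (a ⬝ᵥ M.mulVec a) * (b ⬝ᵥ M.mulVec b) := by
  have key : ∀ t : ℝ, 0 ≤ (b ⬝ᵥ M.mulVec b) * (t * t) + (2 * (a ⬝ᵥ M.mulVec b)) * t
      + (a ⬝ᵥ M.mulVec a) := by
    intro t
    have h := hpos (a + t • b)
    have hexp : (a + t • b) ⬝ᵥ M.mulVec (a + t • b)
        = (b ⬝ᵥ M.mulVec b) * (t * t) + (2 * (a ⬝ᵥ M.mulVec b)) * t + (a ⬝ᵥ M.mulVec a) := by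
      rw [mulVec_add, mulVec_smul, dotProduct_add, add_dotProduct, add_dotProduct,
        smul_dotProduct, dotProduct_smul, smul_dotProduct, dotProduct_smul,
        dot_symm M hs b a]
      ring_nf
    linarith [hexp ▸ h]
  have hd := discrim_le_zero key
  rw [discrim] at hd
  nlinarith [hd]

-- determinant bound
lemma det_bound {n : ℕ} (A : Matrix (Fin n) (Fin n) ℝ) (C' : ℝ) (h0 : 0 ≤ C')
    (hA : ∀ i j, |A i j| ≤ C') : |A.det| ≤ (n.factorial : ℝ) * C' ^ n := by
  rw [det_apply']
  calc |∑ σ : Equiv.Perm (Fin n), Equiv.Perm.sign σ * ∏ i, A (σ i) i|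
      ≤ ∑ σ : Equiv.Perm (Fin n), |(Equiv.Perm.sign σ : ℝ) * ∏ i, A (σ i) i| :=
        Finset.abs_sum_le_sum_abs _ _
    _ ≤ ∑ _σ : Equiv.Perm (Fin n), C' ^ n := by
        apply Finset.sum_le_sum
        intro σ _
        rw [abs_mul]
        have h1 : |(Equiv.Perm.sign σ : ℝ)| = 1 := by
          rcases Int.units_eq_one_or (Equiv.Perm.sign σ) with h | h <;> simp [h]
        rw [h1, one_mul]
        calc |∏ i, A (σ i) i| = ∏ i, |A (σ i) i| := by rw [Finset.abs_prod]
          _ ≤ ∏ _i : Fin n, C' := Finset.prod_le_prod (fun _ _ => abs_nonneg _)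
              (fun i _ => hA _ _)
          _ = C' ^ n := by simp
    _ = (n.factorial : ℝ) * C' ^ n := by
        simp [Finset.sum_const, Fintype.card_perm]

-- bound on inverse entries
lemma inv_entry_bound {n : ℕ} (A : Matrix (Fin n) (Fin n) ℝ) (C d : ℝ) (hd : 0 < d)
    (hdet : d ≤ A.det) (hA : ∀ i j, |A i j| ≤ C) (i j : Fin n) :
    |A⁻¹ i j| ≤ (n.factorial : ℝ) * (max C 1) ^ n / d := by
  have hC1 : (0:ℝ) ≤ max C 1 := le_trans zero_le_one (le_max_right _ _)
  have hadj : |A.adjugate i j| ≤ (n.factorial : ℝ) * (max C 1) ^ n := by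
    rw [adjugate_apply]
    apply det_bound _ _ hC1
    intro k l
    rw [updateRow_apply]
    split
    · rcases eq_or_ne l i with h | h <;> simp [Pi.single_apply, h]
    · exact le_trans (hA k l) (le_max_left _ _)
  have hdet0 : A.det ≠ 0 := ne_of_gt (lt_of_lt_of_le hd hdet)
  have : A⁻¹ i j = (A.det)⁻¹ * A.adjugate i j := by
    rw [Matrix.inv_def, Matrix.smul_apply, Ring.inverse_eq_inv, smul_eq_mul]
  rw [this, abs_mul, abs_inv, abs_of_pos (lt_of_lt_of_le hd hdet)]
  rw [div_eq_mul_inv, mul_comm ((n.factorial : ℝ) * (max C 1) ^ n) _]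
  apply mul_le_mul _ hadj (abs_nonneg _) (inv_nonneg.mpr (le_of_lt hd))
  exact inv_anti₀ hd hdet

/-- Proposition 1.4 of the paper, case `k = 1`: there is a constant `K = K(n, C, d) > 0`
such that for every `C¹` Riemannian metric `g` on an open set `U ⊆ ℝⁿ` whose entries and
first partial derivatives of entries are bounded by `C` and whose determinant is at least
`d > 0`, every unit-speed geodesic `c` of `g` defined on an interval `J` satisfies
`‖c'(t)‖ ≤ K` and `‖c''(t)‖ ≤ K` (Euclidean norms) for all `t ∈ J`. -/
theorem geodesic_derivatives_bound (n : ℕ) (hn : 1 ≤ n) (C d : ℝ) (hC : 0 < C) (hd : 0 < d) :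
    ∃ K : ℝ, 0 < K ∧
      ∀ (U : Set (Fin n → ℝ)), IsOpen U →
      ∀ (g : (Fin n → ℝ) → Matrix (Fin n) (Fin n) ℝ),
        (∀ i j, ContDiffOn ℝ 1 (fun y => g y i j) U) →
        (∀ x ∈ U, (g x).IsSymm) → (∀ x ∈ U, (g x).PosDef) →
        (∀ x ∈ U, ∀ i j, |g x i j| ≤ C) →
        (∀ x ∈ U, ∀ i j l, |partialEntry n g i j l x| ≤ C) →
        (∀ x ∈ U, d ≤ (g x).det) →
      ∀ (J : Set ℝ), J.OrdConnected →
      ∀ (c : ℝ → Fin n → ℝ),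
        (∀ t ∈ J, c t ∈ U) →
        (∀ t ∈ J, DifferentiableAt ℝ c t) →
        (∀ t ∈ J, DifferentiableAt ℝ (deriv c) t) →
        (∀ t ∈ J, deriv c t ⬝ᵥ (g (c t)).mulVec (deriv c t) = 1) →
        (∀ t ∈ J, ∀ i, deriv (deriv c) t i =
          - ∑ s, ∑ t', christoffel n g i s t' (c t) * deriv c t s * deriv c t t') →
      ∀ t ∈ J,
        Real.sqrt (∑ i, (deriv c t i) ^ 2) ≤ K ∧
        Real.sqrt (∑ i, (deriv (deriv c) t i) ^ 2) ≤ K := by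
  set B : ℝ := (n.factorial : ℝ) * (max C 1) ^ n / d with hBdef
  have hB : 0 < B := by
    apply div_pos _ hd
    apply mul_pos (by exact_mod_cast n.factorial_pos)
    exact pow_pos (lt_of_lt_of_le one_pos (le_max_right _ _)) n
  set Γb : ℝ := (1 / 2) * ((n : ℝ) * (B * (3 * C))) with hΓbdef
  have hΓb : 0 < Γb := by
    apply mul_pos (by norm_num)
    apply mul_pos (by exact_mod_cast hn)
    exact mul_pos hB (by linarith)
  set M2 : ℝ := Γb * ((n : ℝ) * ((n : ℝ) * B)) with hM2def
  have hM2 : 0 < M2 := by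
    apply mul_pos hΓb
    apply mul_pos (by exact_mod_cast hn)
    exact mul_pos (by exact_mod_cast hn) hB
  refine ⟨max (Real.sqrt ((n : ℝ) * B)) (Real.sqrt ((n : ℝ) * M2 ^ 2)) + 1, ?_, ?_⟩
  · have := Real.sqrt_nonneg ((n : ℝ) * B)
    have := le_max_left (Real.sqrt ((n : ℝ) * B)) (Real.sqrt ((n : ℝ) * M2 ^ 2))
    linarith
  intro U _hU g _hg hsymm hpd hgC hgC' hgdet J _hJ c hcU _hc1 _hc2 hunit hgeo t ht
  set v : Fin n → ℝ := deriv c t with hv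
  set x : Fin n → ℝ := c t with hx
  have hxU : x ∈ U := hcU t ht
  set G : Matrix (Fin n) (Fin n) ℝ := g x with hG
  have hGsym : Gᵀ = G := hsymm x hxU
  have hGpd : G.PosDef := hpd x hxU
  have hGpos : ∀ w : Fin n → ℝ, 0 ≤ w ⬝ᵥ G.mulVec w := by
    intro w
    have := hGpd.posSemidef.dotProduct_mulVec_nonneg w
    simpa using this
  have hdetpos : 0 < G.det := hGpd.det_pos
  have hdetG : d ≤ G.det := hgdet x hxU
  have hinvE : ∀ i j, |G⁻¹ i j| ≤ B := fun i j =>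
    inv_entry_bound G C d hd hdetG (hgC x hxU) i j
  have hunitdet : IsUnit G.det := isUnit_iff_ne_zero.mpr (ne_of_gt hdetpos)
  have hGG : G * G⁻¹ = 1 := mul_nonsing_inv _ hunitdet
  set E : ℝ := ∑ i, v i ^ 2 with hEdef
  have hE0 : 0 ≤ E := Finset.sum_nonneg fun i _ => sq_nonneg _
  have hEv : v ⬝ᵥ v = E := by simp [dotProduct, hEdef, sq]
  have hu : v ⬝ᵥ G.mulVec v = 1 := hunit t ht
  -- Cauchy-Schwarz step
  have key : E ^ 2 ≤ (v ⬝ᵥ G⁻¹.mulVec v) * 1 := by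
    have h1 : (G⁻¹.mulVec v) ⬝ᵥ G.mulVec v = E := by
      rw [dot_symm G hGsym, mulVec_mulVec, hGG, one_mulVec, hEv]
    have h2 : (G⁻¹.mulVec v) ⬝ᵥ G.mulVec (G⁻¹.mulVec v) = v ⬝ᵥ G⁻¹.mulVec v := by
      rw [mulVec_mulVec, hGG, one_mulVec, dotProduct_comm]
    have := cs G hGsym hGpos (G⁻¹.mulVec v) v
    rw [h1, h2, hu] at this
    exact this
  have habs : ∀ i, |(G⁻¹.mulVec v) i| ≤ B * ∑ j, |v j| := by
    intro i
    calc |(G⁻¹.mulVec v) i| = |∑ j, G⁻¹ i j * v j| := rfl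
      _ ≤ ∑ j, |G⁻¹ i j * v j| := Finset.abs_sum_le_sum_abs _ _
      _ ≤ ∑ j, B * |v j| := Finset.sum_le_sum fun j _ => by
          rw [abs_mul]
          exact mul_le_mul_of_nonneg_right (hinvE i j) (abs_nonneg _)
      _ = B * ∑ j, |v j| := by rw [Finset.mul_sum]
  have hquad : v ⬝ᵥ G⁻¹.mulVec v ≤ B * (∑ j, |v j|) ^ 2 := by
    calc v ⬝ᵥ G⁻¹.mulVec v ≤ |v ⬝ᵥ G⁻¹.mulVec v| := le_abs_self _
      _ ≤ ∑ i, |v i * (G⁻¹.mulVec v) i| := Finset.abs_sum_le_sum_abs _ _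
      _ ≤ ∑ i, |v i| * (B * ∑ j, |v j|) := Finset.sum_le_sum fun i _ => by
          rw [abs_mul]
          exact mul_le_mul_of_nonneg_left (habs i) (abs_nonneg _)
      _ = B * (∑ j, |v j|) ^ 2 := by rw [← Finset.sum_mul]; ring
  have hS2 : (∑ j, |v j|) ^ 2 ≤ (n : ℝ) * E := by
    have := sq_sum_le_card_mul_sum_sq (s := Finset.univ) (f := fun j => |v j|)
    simpa [sq_abs, hEdef] using this
  have hE : E ≤ (n : ℝ) * B := by
    have h3 : E ^ 2 ≤ B * ((n : ℝ) * E) := by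
      calc E ^ 2 ≤ (v ⬝ᵥ G⁻¹.mulVec v) * 1 := key
        _ = v ⬝ᵥ G⁻¹.mulVec v := mul_one _
        _ ≤ B * (∑ j, |v j|) ^ 2 := hquad
        _ ≤ B * ((n : ℝ) * E) := mul_le_mul_of_nonneg_left hS2 (le_of_lt hB)
    rcases eq_or_lt_of_le hE0 with h | h
    · have hn' : (0:ℝ) < n := by exact_mod_cast Nat.lt_of_lt_of_le Nat.zero_lt_one hn
      nlinarith
    · have : E * E ≤ ((n : ℝ) * B) * E := by nlinarith
      exact le_of_mul_le_mul_right this h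
  constructor
  · calc Real.sqrt (∑ i, v i ^ 2) ≤ Real.sqrt ((n : ℝ) * B) := Real.sqrt_le_sqrt hE
      _ ≤ max (Real.sqrt ((n : ℝ) * B)) (Real.sqrt ((n : ℝ) * M2 ^ 2)) := le_max_left _ _
      _ ≤ _ := by linarith
  · -- second derivative bound
    have hΓbound : ∀ r s t', |christoffel n g r s t' x| ≤ Γb := by
      intro r s t'
      rw [christoffel, abs_mul]
      have h12 : |(1 : ℝ) / 2| = 1 / 2 := by norm_num
      rw [h12, hΓbdef]
      apply mul_le_mul_of_nonneg_left _ (by norm_num)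
      calc |∑ l, (g x)⁻¹ r l *
            (partialEntry n g l t' s x + partialEntry n g l s t' x - partialEntry n g s t' l x)|
          ≤ ∑ l, |(g x)⁻¹ r l *
            (partialEntry n g l t' s x + partialEntry n g l s t' x - partialEntry n g s t' l x)| :=
            Finset.abs_sum_le_sum_abs _ _
        _ ≤ ∑ _l : Fin n, B * (3 * C) := by
            apply Finset.sum_le_sum
            intro l _
            rw [abs_mul]
            apply mul_le_mul (hinvE r l) _ (abs_nonneg _) (le_of_lt hB)
            have p1 := hgC' x hxU l t' s
            have p2 := hgC' x hxU l s t'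
            have p3 := hgC' x hxU s t' l
            calc |partialEntry n g l t' s x + partialEntry n g l s t' x
                  - partialEntry n g s t' l x|
                ≤ |partialEntry n g l t' s x| + |partialEntry n g l s t' x|
                  + |partialEntry n g s t' l x| := by
                  have h1 : |partialEntry n g l t' s x + partialEntry n g l s t' x
                      - partialEntry n g s t' l x| ≤ |partialEntry n g l t' s x
                      + partialEntry n g l s t' x| + |partialEntry n g s t' l x| :=
                    abs_sub _ _
                  have h2 : |partialEntry n g l t' s x + partialEntry n g l s t' x|
                      ≤ |partialEntry n g l t' s x| + |partialEntry n g l s t' x| :=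
                    abs_add_le _ _
                  linarith
              _ ≤ 3 * C := by linarith
        _ = (n : ℝ) * (B * (3 * C)) := by simp [Finset.sum_const, mul_comm]
    have hsecond : ∀ i, |deriv (deriv c) t i| ≤ M2 := by
      intro i
      rw [hgeo t ht i, abs_neg]
      calc |∑ s, ∑ t', christoffel n g i s t' x * v s * v t'|
          ≤ ∑ s, ∑ t', |christoffel n g i s t' x * v s * v t'| := by
            refine le_trans (Finset.abs_sum_le_sum_abs _ _) ?_
            exact Finset.sum_le_sum fun s _ => Finset.abs_sum_le_sum_abs _ _
        _ ≤ ∑ s, ∑ t', Γb * (|v s| * |v t'|) := by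
            apply Finset.sum_le_sum; intro s _
            apply Finset.sum_le_sum; intro t' _
            rw [abs_mul, abs_mul, mul_assoc]
            exact mul_le_mul_of_nonneg_right (hΓbound i s t')
              (mul_nonneg (abs_nonneg _) (abs_nonneg _))
        _ = Γb * (∑ s, |v s|) ^ 2 := by
            rw [sq, Finset.sum_mul_sum, Finset.mul_sum]
            refine Finset.sum_congr rfl fun s _ => ?_
            rw [Finset.mul_sum]
        _ ≤ Γb * ((n : ℝ) * ((n : ℝ) * B)) := by
            apply mul_le_mul_of_nonneg_left _ (le_of_lt hΓb)
            calc (∑ s, |v s|) ^ 2 ≤ (n : ℝ) * E := hS2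
              _ ≤ (n : ℝ) * ((n : ℝ) * B) :=
                mul_le_mul_of_nonneg_left hE (Nat.cast_nonneg n)
    have hsum2 : ∑ i, (deriv (deriv c) t i) ^ 2 ≤ (n : ℝ) * M2 ^ 2 := by
      calc ∑ i, (deriv (deriv c) t i) ^ 2 ≤ ∑ _i : Fin n, M2 ^ 2 := by
            apply Finset.sum_le_sum
            intro i _
            rw [← sq_abs]
            exact pow_le_pow_left₀ (abs_nonneg _) (hsecond i) 2
        _ = (n : ℝ) * M2 ^ 2 := by simp [Finset.sum_const, mul_comm]
    calc Real.sqrt (∑ i, (deriv (deriv c) t i) ^ 2)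
        ≤ Real.sqrt ((n : ℝ) * M2 ^ 2) := Real.sqrt_le_sqrt hsum2
      _ ≤ max (Real.sqrt ((n : ℝ) * B)) (Real.sqrt ((n : ℝ) * M2 ^ 2)) := le_max_right _ _
      _ ≤ _ := by linarith
end

section
/- Let X be a topological space and C ⊆ X. Let h : X × [0,1] → X be a continuous map with h(x,0) = x and h(x,1) ∈ C for all x ∈ X, and h(c,t) = c for all c ∈ C and all t ∈ [0,1] (a strong deformation retraction of X onto C). Let B ⊆ C and let V ⊆ X be open with B ⊆ V. Suppose there exist a set W with B ⊆ W ⊆ C ∩ V which is open in the subspace topology of C, and a continuous map f : W × [0,1] → V with f(w,0) = w and f(w,1) ∈ B for all w ∈ W, and f(b,t) = b for all b ∈ B and t ∈ [0,1]. Then there exist an open set U ⊆ X with B ⊆ U ⊆ V and a continuous map g : U × [0,1] → V with g(x,0) = x and g(x,1) ∈ B for all x ∈ U, and g(b,t) = b for all b ∈ B and all t ∈ [0,1]. -/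
open unitInterval

open Set

noncomputable def rI (r : ℝ) : I := Set.projIcc (0:ℝ) 1 zero_le_one r

lemma rI_cont : Continuous rI := continuous_projIcc (h := zero_le_one)

lemma rI_coe (r : ℝ) : ((rI r : I) : ℝ) = max 0 (min 1 r) :=
  Set.coe_projIcc (0:ℝ) 1 zero_le_one r

lemma rI_zero : rI 0 = 0 := by ext; rw [rI_coe]; norm_num
lemma rI_one : rI 1 = 1 := by ext; rw [rI_coe]; norm_num

/-- Proposition 1.11 of the paper, in abstract form.  If `h` is a strong deformation
retraction of `X` onto `C`, `B ⊆ C`, `V` is an open neighborhood of `B`, and some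
relatively open neighborhood `W` of `B` in `C` deformation retracts to `B` inside `V`,
then there is an open neighborhood `U` of `B` in `X` with `U ⊆ V` which deformation
retracts to `B` inside `V`. -/
theorem nbhd_deformation_retract {X : Type*} [TopologicalSpace X]
    (C B V : Set X) (hBC : B ⊆ C) (hVopen : IsOpen V) (hBV : B ⊆ V)
    (h : X × I → X) (hcont : Continuous h)
    (h0 : ∀ x, h (x, 0) = x) (h1 : ∀ x, h (x, 1) ∈ C)
    (hfix : ∀ c ∈ C, ∀ t, h (c, t) = c)
    (W : Set X) (hBW : B ⊆ W) (hWCV : W ⊆ C ∩ V)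
    (hWopen : IsOpen ((Subtype.val : C → X) ⁻¹' W))
    (f : X × I → X) (hfcont : ContinuousOn f (W ×ˢ (Set.univ : Set I)))
    (hfV : ∀ w ∈ W, ∀ t, f (w, t) ∈ V)
    (hf0 : ∀ w ∈ W, f (w, 0) = w) (hf1 : ∀ w ∈ W, f (w, 1) ∈ B)
    (hfB : ∀ b ∈ B, ∀ t, f (b, t) = b) :
    ∃ U : Set X, IsOpen U ∧ B ⊆ U ∧ U ⊆ V ∧
      ∃ g : X × I → X, ContinuousOn g (U ×ˢ (Set.univ : Set I)) ∧
        (∀ x ∈ U, g (x, 0) = x) ∧ (∀ x ∈ U, g (x, 1) ∈ B) ∧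
        (∀ x ∈ U, ∀ t, g (x, t) ∈ V) ∧
        (∀ b ∈ B, ∀ t, g (b, t) = b) := by
  obtain ⟨O, hOopen, hOW⟩ := isOpen_induced_iff.mp hWopen
  have memO : ∀ c ∈ C, (c ∈ O ↔ c ∈ W) := fun c hc => Set.ext_iff.mp hOW ⟨c, hc⟩
  set U : Set X := {x | h (x, 1) ∈ O ∧ ∀ t, h (x, t) ∈ V} with hU
  have hUW : ∀ x ∈ U, h (x, 1) ∈ W := fun x hx => (memO _ (h1 x)).mp hx.1
  have hUopen : IsOpen U := by
    have he : U = ((fun x => h (x, 1)) ⁻¹' O) ∩ {x | ∀ t, h (x, t) ∈ V} := rfl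
    rw [he]
    refine IsOpen.inter (hOopen.preimage (hcont.comp
      (continuous_id.prodMk continuous_const))) ?_
    rw [isOpen_iff_mem_nhds]
    intro x hx
    obtain ⟨u, v, huo, hvo, hxu, hv, huv⟩ := generalized_tube_lemma isCompact_singleton
      isCompact_univ (hVopen.preimage hcont)
      (by rintro ⟨a, t⟩ ⟨ha, -⟩; cases ha; exact hx t)
    exact mem_nhds_iff.mpr ⟨u, fun y hy t => huv ⟨hy, hv (mem_univ t)⟩, huo, hxu rfl⟩
  have hBU : B ⊆ U := by
    intro b hb
    refine ⟨?_, fun t => by rw [hfix b (hBC hb) t]; exact hBV hb⟩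
    rw [hfix b (hBC hb) 1]
    exact (memO b (hBC hb)).mpr (hBW hb)
  have hUV : U ⊆ V := fun x hx => by have := hx.2 0; rwa [h0] at this
  refine ⟨U, hUopen, hBU, hUV, ?_⟩
  classical
  set g : X × I → X := fun p =>
    if ((p.2 : ℝ)) ≤ 1/2 then h (p.1, rI (2 * (p.2 : ℝ)))
    else f (h (p.1, 1), rI (2 * (p.2 : ℝ) - 1)) with hg
  have hc2 : Continuous (fun p : X × I => ((p.2 : ℝ))) :=
    continuous_subtype_val.comp continuous_snd
  refine ⟨g, ?_, ?_, ?_, ?_, ?_⟩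
  · apply ContinuousOn.if
    · rintro ⟨x, t⟩ ⟨hmem, hfr⟩
      have ht : ((t : ℝ)) = 1/2 := by
        have h2 := hc2.frontier_preimage_subset (Set.Iic (1/2)) hfr
        simpa [frontier_Iic] using h2
      have hx : x ∈ U := hmem.1
      have e1 : rI (2 * (t : ℝ)) = 1 := by rw [ht]; norm_num [rI_one]
      have e2 : rI (2 * (t : ℝ) - 1) = 0 := by rw [ht]; norm_num [rI_zero]
      simp only
      rw [e1, e2, hf0 _ (hUW x hx)]
    · exact ((hcont.comp (continuous_fst.prodMk
        (rI_cont.comp (continuous_const.mul hc2)))).continuousOn).mono inter_subset_left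
    · refine ContinuousOn.comp hfcont ?_ ?_
      · exact (((hcont.comp (continuous_fst.prodMk continuous_const)).prodMk
          (rI_cont.comp ((continuous_const.mul hc2).sub
            continuous_const))).continuousOn).mono inter_subset_left
      · rintro ⟨x, t⟩ ⟨⟨hxU, -⟩, -⟩
        exact ⟨hUW x hxU, mem_univ _⟩
  · intro x hx
    have hle : (((0 : I) : ℝ)) ≤ 1/2 := by norm_num
    simp only [hg, hle, if_pos]
    have e : rI (2 * (((0:I)) : ℝ)) = 0 := by norm_num [rI_zero]
    rw [e, h0]
  · intro x hx
    have hn : ¬ ((((1 : I)) : ℝ) ≤ 1/2) := by norm_num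
    rw [hg]
    simp only [hn, if_false]
    have e : rI (2 * (((1:I)) : ℝ) - 1) = 1 := by norm_num [rI_one]
    rw [e]
    exact hf1 _ (hUW x hx)
  · intro x hx t
    by_cases hc : ((t : ℝ)) ≤ 1/2
    · simp only [hg, hc, if_pos]; exact hx.2 _
    · rw [hg]; simp only [hc, if_false]; exact hfV _ (hUW x hx) _
  · intro b hb t
    by_cases hc : ((t : ℝ)) ≤ 1/2
    · simp only [hg, hc, if_pos]; exact hfix b (hBC hb) _
    · rw [hg]; simp only [hc, if_false]
      rw [hfix b (hBC hb) 1]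
      exact hfB b hb _
end

section
/- Let N be a nonempty compact Hausdorff topological space, let I = [0,1], let k ≥ 1, and let D ⊆ ℝᵏ be the closed unit ball with boundary sphere S. Suppose β, β̄ : D → C(N × I, N × I) are continuous maps into the space of continuous self-maps of N × I with the compact-open topology, such that for every u ∈ D: (i) β̄(u) ∘ β(u) = id_{N×I} and β(u) ∘ β̄(u) = id_{N×I} (so each β(u) is a homeomorphism of N × I), (ii) both β(u) and β̄(u) map N × {0} into N × {0}, and (iii) for every u ∈ S and every x ∈ N, β(u)(x,0) = (x,0). Then there exist continuous maps β', β̄' : D → C(N × I, N × I) such that for every u ∈ D: β̄'(u) ∘ β'(u) = id_{N×I} and β'(u) ∘ β̄'(u) = id_{N×I}; β'(u)(x,0) = (x,0) for every x ∈ N; and β'(u) = β(u) for every u ∈ S. -/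
open unitInterval

/-- Lemma 2.1 of the paper, as a relative lifting property: given a disc `D = 𝔻ᵏ` of
homeomorphisms of `N × I` preserving the bottom `N × {0}`, which over the boundary sphere
consists of pseudoisotopies (maps restricting to the identity on `N × {0}`), one can
replace it by a disc of pseudoisotopies agreeing with the original family over the
boundary sphere.  This expresses injectivity of `π_k P(N) → π_k TOP(N × I)`. -/
theorem pseudoisotopy_pi_k_injective
    {N : Type*} [TopologicalSpace N] [CompactSpace N] [T2Space N] [Nonempty N]
    (k : ℕ) (hk : 1 ≤ k)
    (β βbar : (Metric.closedBall (0 : EuclideanSpace ℝ (Fin k)) 1) → C(N × I, N × I))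
    (hβ : Continuous β) (hβbar : Continuous βbar)
    (hinv : ∀ u, (βbar u).comp (β u) = ContinuousMap.id (N × I) ∧
                 (β u).comp (βbar u) = ContinuousMap.id (N × I))
    (hbot : ∀ u (x : N), (β u (x, 0)).2 = 0 ∧ (βbar u (x, 0)).2 = 0)
    (hsphere : ∀ u, u.val ∈ Metric.sphere (0 : EuclideanSpace ℝ (Fin k)) 1 →
      ∀ x : N, β u (x, 0) = (x, 0)) :
    ∃ β' βbar' : (Metric.closedBall (0 : EuclideanSpace ℝ (Fin k)) 1) → C(N × I, N × I),
      Continuous β' ∧ Continuous βbar' ∧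
      (∀ u, (βbar' u).comp (β' u) = ContinuousMap.id (N × I) ∧
            (β' u).comp (βbar' u) = ContinuousMap.id (N × I)) ∧
      (∀ u (x : N), β' u (x, 0) = (x, 0)) ∧
      (∀ u, u.val ∈ Metric.sphere (0 : EuclideanSpace ℝ (Fin k)) 1 →
        β' u = β u) := by
  -- pointwise inverse relations
  have hba : ∀ u (p : N × I), βbar u (β u p) = p := fun u p =>
    DFunLike.congr_fun (hinv u).1 p
  have hab : ∀ u (p : N × I), β u (βbar u p) = p := fun u p =>
    DFunLike.congr_fun (hinv u).2 p
  have hb0 : ∀ u (x : N), β u (x, 0) = ((β u (x, 0)).1, 0) := fun u x =>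
    Prod.ext rfl (hbot u x).1
  have hbb0 : ∀ u (x : N), βbar u (x, 0) = ((βbar u (x, 0)).1, 0) := fun u x =>
    Prod.ext rfl (hbot u x).2
  -- joint continuity of evaluation
  have hev : Continuous fun q :
      (Metric.closedBall (0 : EuclideanSpace ℝ (Fin k)) 1) × (N × I) => β q.1 q.2 :=
    (ContinuousEval.continuous_eval (F := C(N × I, N × I))).comp (hβ.prodMap continuous_id)
  have hevbar : Continuous fun q :
      (Metric.closedBall (0 : EuclideanSpace ℝ (Fin k)) 1) × (N × I) => βbar q.1 q.2 :=
    (ContinuousEval.continuous_eval (F := C(N × I, N × I))).comp (hβbar.prodMap continuous_id)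
  refine ⟨fun u => ⟨fun p => ((βbar u ((β u p).1, 0)).1, (β u p).2), by fun_prop⟩,
          fun u => ⟨fun p => βbar u ((β u (p.1, 0)).1, p.2), by fun_prop⟩, ?_, ?_, ?_, ?_, ?_⟩
  · -- continuity of β'
    apply ContinuousMap.continuous_of_continuous_uncurry
    dsimp [Function.uncurry]
    have h1 : Continuous fun q :
        (Metric.closedBall (0 : EuclideanSpace ℝ (Fin k)) 1) × (N × I) =>
        βbar q.1 ((β q.1 q.2).1, 0) :=
      hevbar.comp (continuous_fst.prodMk
        (((hev.fst).prodMk continuous_const)))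
    exact (h1.fst).prodMk hev.snd
  · -- continuity of βbar'
    apply ContinuousMap.continuous_of_continuous_uncurry
    dsimp [Function.uncurry]
    exact hevbar.comp (continuous_fst.prodMk
      (((hev.comp (continuous_fst.prodMk
        ((continuous_fst.comp continuous_snd).prodMk continuous_const))).fst).prodMk
        (continuous_snd.comp continuous_snd)))
  · -- mutual inverses
    intro u
    refine ⟨ContinuousMap.ext fun p => ?_, ContinuousMap.ext fun p => ?_⟩
    · show βbar u ((β u ((βbar u ((β u p).1, 0)).1, 0)).1, (β u p).2) = p
      rw [← hbb0 u (β u p).1, hab u ((β u p).1, 0)]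
      exact hba u p
    · show ((βbar u ((β u (βbar u ((β u (p.1, 0)).1, p.2))).1, 0)).1,
        (β u (βbar u ((β u (p.1, 0)).1, p.2))).2) = p
      rw [hab u ((β u (p.1, 0)).1, p.2)]
      show ((βbar u ((β u (p.1, 0)).1, 0)).1, p.2) = p
      rw [← hb0 u p.1, hba u (p.1, 0)]
  · -- bottom
    intro u x
    show ((βbar u ((β u (x, 0)).1, 0)).1, (β u (x, 0)).2) = (x, 0)
    rw [← hb0 u x, hba u (x, 0)]
    exact Prod.ext rfl (hbot u x).1
  · -- sphere
    intro u hu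
    refine ContinuousMap.ext fun p => ?_
    show ((βbar u ((β u p).1, 0)).1, (β u p).2) = β u p
    rw [← hsphere u hu (β u p).1, hba u ((β u p).1, 0)]
end

section
/- Let δ > 0. Let f : ℝ → ℝ be a C² function with f(x) = 1 for all x ∈ [−1,1], f''(x) > 0 for all x with |x| > 1, and f''(x) ≥ δ for all x with |x| ≥ 2. Let α : ℝ × ℝ → ℝ be a C² function such that α(x,s) = 0 whenever |x| ≥ 4 (for all s), and ∂²α/∂x²(x,s) > 0 whenever |x| ≤ 3 and |s| ≤ 1. For t > 0 define f_t : ℝ → ℝ by f_t(x) = f(x) + exp(−1/t) · α(x, sin(1/t)). Then there exists t₀ ∈ (0,1] such that for every t ∈ (0, t₀] and every x ∈ ℝ, f_t''(x) ≥ 0. -/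
open Filter Set Topology

-- derivative of a slice of a differentiable 2-variable function
lemma slice_deriv (G : ℝ × ℝ → ℝ) (hG : Differentiable ℝ G) (x s : ℝ) :
    deriv (fun y => G (y, s)) x = fderiv ℝ G (x, s) (1, 0) := by
  have h : HasDerivAt (fun y : ℝ => (y, s)) ((1 : ℝ), (0 : ℝ)) x :=
    (hasDerivAt_id x).prodMk (hasDerivAt_const x s)
  exact ((hG (x, s)).hasFDerivAt.comp_hasDerivAt x h).deriv

lemma second_deriv_slice (F : ℝ → ℝ → ℝ)
    (hF : ContDiff ℝ 2 (fun p : ℝ × ℝ => F p.1 p.2)) :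
    ∃ G : ℝ × ℝ → ℝ, Continuous G ∧
      ∀ x s : ℝ, deriv (deriv (fun y => F y s)) x = G (x, s) := by
  set Fp : ℝ × ℝ → ℝ := fun p => F p.1 p.2 with hFp
  have h21 : ((1 : WithTop ℕ∞) + 1) ≤ 2 := by norm_num
  have hF1 : ContDiff ℝ 1 (fun p : ℝ × ℝ => fderiv ℝ Fp p (1, 0)) :=
    (hF.fderiv_right h21).clm_apply contDiff_const
  set F1 : ℝ × ℝ → ℝ := fun p => fderiv ℝ Fp p (1, 0) with hF1def
  have h10 : ((0 : WithTop ℕ∞) + 1) ≤ 1 := by norm_num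
  set F2 : ℝ × ℝ → ℝ := fun p => fderiv ℝ F1 p (1, 0) with hF2def
  have hF2c : Continuous F2 := by
    have : ContDiff ℝ 0 F2 := (hF1.fderiv_right h10).clm_apply contDiff_const
    exact this.continuous
  refine ⟨F2, hF2c, fun x s => ?_⟩
  have hd1 : ∀ y, deriv (fun z => F z s) y = F1 (y, s) := fun y =>
    slice_deriv Fp (hF.differentiable (by norm_num)) y s
  have : deriv (fun z => F z s) = fun y => F1 (y, s) := funext hd1
  rw [this]
  exact slice_deriv F1 (hF1.differentiable one_ne_zero) x s

-- second derivative vanishes where the function is locally constant (open set)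
lemma second_deriv_zero_on_open {g : ℝ → ℝ} {U : Set ℝ} (hU : IsOpen U)
    (hg : ∀ y ∈ U, g y = 0) : ∀ y ∈ U, deriv (deriv g) y = 0 := by
  have h1 : ∀ y ∈ U, deriv g y = 0 := by
    intro y hy
    have he : g =ᶠ[𝓝 y] (fun _ => 0) :=
      Filter.eventuallyEq_of_mem (hU.mem_nhds hy) hg
    rw [he.deriv_eq, deriv_const]
  intro y hy
  have he : deriv g =ᶠ[𝓝 y] (fun _ => 0) :=
    Filter.eventuallyEq_of_mem (hU.mem_nhds hy) h1
  rw [he.deriv_eq, deriv_const]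



/-- Appendix A of the paper: for the perturbed profile functions
`f_t(x) = f(x) + exp(−1/t)·α(x, sin(1/t))`, there is `t₀ ∈ (0,1]` such that `f_t'' ≥ 0`
everywhere for all `t ∈ (0, t₀]`; hence the surfaces of revolution `M_{f_t}` are
nonpositively curved for all sufficiently small `t > 0`. -/
theorem swinging_neck_nonneg_second_deriv (δ : ℝ) (hδ : 0 < δ)
    (f : ℝ → ℝ) (hf : ContDiff ℝ 2 f)
    (hf1 : ∀ x ∈ Set.Icc (-1 : ℝ) 1, f x = 1)
    (hf2 : ∀ x : ℝ, 1 < |x| → 0 < deriv (deriv f) x)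
    (hf3 : ∀ x : ℝ, 2 ≤ |x| → δ ≤ deriv (deriv f) x)
    (α : ℝ → ℝ → ℝ) (hα : ContDiff ℝ 2 (fun p : ℝ × ℝ => α p.1 p.2))
    (hα1 : ∀ x s : ℝ, 4 ≤ |x| → α x s = 0)
    (hα2 : ∀ x s : ℝ, |x| ≤ 3 → |s| ≤ 1 → 0 < deriv (deriv (fun y => α y s)) x) :
    ∃ t₀ ∈ Set.Ioc (0 : ℝ) 1, ∀ t ∈ Set.Ioc (0 : ℝ) t₀, ∀ x : ℝ,
      0 ≤ deriv (deriv (fun y => f y + Real.exp (-1 / t) * α y (Real.sin (1 / t)))) x := by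
  -- continuous representation of the second x-derivative of α
  obtain ⟨G, hGc, hG⟩ := second_deriv_slice α hα
  -- bound on G on a compact set
  obtain ⟨M, hM⟩ : ∃ M : ℝ, ∀ p ∈ (Icc (-4 : ℝ) 4 ×ˢ Icc (-1 : ℝ) 1), |G p| ≤ M := by
    obtain ⟨M, hM⟩ := (IsCompact.exists_bound_of_continuousOn
      ((isCompact_Icc.prod isCompact_Icc)) hGc.continuousOn)
    exact ⟨M, fun p hp => by simpa using hM p hp⟩
  have hMnn : 0 ≤ M := le_trans (abs_nonneg _) (hM ((0 : ℝ), (0 : ℝ))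
    (Set.mem_prod.mpr ⟨Set.mem_Icc.mpr (by norm_num), Set.mem_Icc.mpr (by norm_num)⟩))
  -- choose t₀
  have htend : Tendsto (fun t : ℝ => Real.exp (-1 / t) * M) (𝓝[>] 0) (𝓝 0) := by
    have h1 : Tendsto (fun t : ℝ => -1 / t) (𝓝[>] (0 : ℝ)) atBot := by
      have := tendsto_inv_nhdsGT_zero (𝕜 := ℝ)
      have h2 : Tendsto (fun t : ℝ => -(t⁻¹)) (𝓝[>] (0 : ℝ)) atBot :=
        tendsto_neg_atTop_atBot.comp this
      refine h2.congr fun t => by ring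
    have := (Real.tendsto_exp_atBot.comp h1).mul_const M
    simpa using this
  have hev : ∀ᶠ t in 𝓝[>] (0 : ℝ), Real.exp (-1 / t) * M < δ ∧ t ∈ Ioc (0 : ℝ) 1 := by
    filter_upwards [htend.eventually (gt_mem_nhds hδ),
      Ioc_mem_nhdsGT (by norm_num : (0:ℝ) < 1)] with t h1 h2
    exact ⟨h1, h2⟩
  obtain ⟨t₀, ht₀M, ht₀mem⟩ := hev.exists
  refine ⟨t₀, ht₀mem, fun t ht x => ?_⟩
  have htpos : 0 < t := ht.1
  set c : ℝ := Real.exp (-1 / t) with hc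
  have hcpos : 0 < c := Real.exp_pos _
  set s : ℝ := Real.sin (1 / t) with hs
  have hs1 : |s| ≤ 1 := abs_le.mpr ⟨Real.neg_one_le_sin _, Real.sin_le_one _⟩
  -- c ≤ exp(-1/t₀)
  have hcle : c ≤ Real.exp (-1 / t₀) := by
    apply Real.exp_le_exp.mpr
    have : 1 / t₀ ≤ 1 / t := one_div_le_one_div_of_le htpos ht.2
    have h' : -(1 / t) ≤ -(1 / t₀) := neg_le_neg this
    calc -1 / t = -(1/t) := by ring
      _ ≤ -(1/t₀) := h'
      _ = -1 / t₀ := by ring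
  have hcM : c * M < δ := by
    calc c * M ≤ Real.exp (-1 / t₀) * M := mul_le_mul_of_nonneg_right hcle hMnn
      _ < δ := ht₀M
  -- smoothness of the slice αs
  set αs : ℝ → ℝ := fun y => α y s with hαs
  have hαsC : ContDiff ℝ 2 αs := by
    have : ContDiff ℝ 2 (fun y : ℝ => (y, s)) := contDiff_id.prodMk contDiff_const
    exact hα.comp this
  -- second derivative of f_t
  have hfd : Differentiable ℝ f := hf.differentiable (by norm_num)
  have hfd' : ContDiff ℝ 1 (deriv f) := by
    have h := (contDiff_succ_iff_deriv (n := 1)).mp (by exact_mod_cast hf)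
    exact h.2.2
  have hαsd : Differentiable ℝ αs := hαsC.differentiable (by norm_num)
  have hαsd' : ContDiff ℝ 1 (deriv αs) := by
    have h := (contDiff_succ_iff_deriv (n := 1)).mp (by exact_mod_cast hαsC)
    exact h.2.2
  have key : deriv (deriv (fun y => f y + c * α y s)) x
      = deriv (deriv f) x + c * deriv (deriv αs) x := by
    have h1 : deriv (fun y => f y + c * α y s) = fun y => deriv f y + c * deriv αs y := by
      funext y
      rw [deriv_fun_add (hfd y) ((hαsd y).const_mul c), deriv_const_mul c (hαsd y)]
    rw [h1, deriv_fun_add (hfd'.differentiable one_ne_zero x)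
        ((hαsd'.differentiable one_ne_zero x).const_mul c),
      deriv_const_mul c (hαsd'.differentiable one_ne_zero x)]
  rw [show (fun y => f y + Real.exp (-1 / t) * α y (Real.sin (1 / t)))
      = fun y => f y + c * α y s from rfl, key]
  -- case analysis on x
  rcases le_or_gt |x| 3 with hx3 | hx3
  · -- f'' x ≥ 0 and α'' > 0
    have hf'' : 0 ≤ deriv (deriv f) x := by
      rcases le_or_gt |x| 1 with hx1 | hx1
      · -- f'' = 0 on [-1,1] via closure argument
        have hcl : IsClosed {y : ℝ | deriv (deriv f) y = 0} := by
          have : Continuous (deriv (deriv f)) := by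
            have := (contDiff_one_iff_deriv.mp hfd').2
            exact this
          exact isClosed_eq this continuous_const
        have hsub : Ioo (-1 : ℝ) 1 ⊆ {y : ℝ | deriv (deriv f) y = 0} := by
          intro y hy
          have : ∀ z ∈ Ioo (-1 : ℝ) 1, f z - 1 = 0 := fun z hz => by
            rw [hf1 z (Ioo_subset_Icc_self hz)]; ring
          have h0 := second_deriv_zero_on_open isOpen_Ioo this y hy
          have he : deriv (deriv (fun z => f z - 1)) y = deriv (deriv f) y := by
            have h1 : deriv (fun z => f z - 1) = deriv f := by
              funext z; rw [deriv_fun_sub (hfd z) (differentiable_const 1 z), deriv_const]; ring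
            rw [h1]
          show deriv (deriv f) y = 0
          rw [← he]; exact h0
        have : x ∈ closure (Ioo (-1 : ℝ) 1) := by
          rw [closure_Ioo (by norm_num : (-1 : ℝ) ≠ 1)]
          exact Set.mem_Icc.mpr (abs_le.mp hx1)
        have := (closure_minimal hsub hcl) this
        exact le_of_eq this.symm
      · exact (hf2 x hx1).le
    have hα'' : 0 < deriv (deriv αs) x := hα2 x s hx3 hs1
    have : 0 ≤ c * deriv (deriv αs) x := (mul_pos hcpos hα'').le
    linarith
  · -- |x| > 3 : f'' ≥ δ, and |c * α''| < δ
    have hf'' : δ ≤ deriv (deriv f) x := hf3 x (by linarith)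
    have hbound : |c * deriv (deriv αs) x| < δ := by
      rcases le_or_gt |x| 4 with hx4 | hx4
      · have : deriv (deriv αs) x = G (x, s) := hG x s
        have hmem : ((x, s) : ℝ × ℝ) ∈ Icc (-4 : ℝ) 4 ×ˢ Icc (-1 : ℝ) 1 :=
          Set.mem_prod.mpr ⟨Set.mem_Icc.mpr (abs_le.mp hx4), Set.mem_Icc.mpr (abs_le.mp hs1)⟩
        have h1 : |deriv (deriv αs) x| ≤ M := by rw [this]; exact hM _ hmem
        calc |c * deriv (deriv αs) x| = c * |deriv (deriv αs) x| := by
              rw [abs_mul, abs_of_pos hcpos]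
          _ ≤ c * M := mul_le_mul_of_nonneg_left h1 hcpos.le
          _ < δ := hcM
      · -- α'' = 0 for |x| ≥ 4
        have hzero : deriv (deriv αs) x = 0 := by
          have hcont : Continuous (deriv (deriv αs)) := (contDiff_one_iff_deriv.mp hαsd').2
          have hcl : IsClosed {y : ℝ | deriv (deriv αs) y = 0} :=
            isClosed_eq hcont continuous_const
          rcases lt_or_ge x 0 with hneg | hpos
          · have hsub : Iio (-4 : ℝ) ⊆ {y : ℝ | deriv (deriv αs) y = 0} :=
              second_deriv_zero_on_open isOpen_Iio
                (fun y hy => hα1 y s (by rw [abs_of_neg (by linarith [mem_Iio.mp hy] : y < 0)]; linarith [mem_Iio.mp hy]))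
            have hx : x ∈ closure (Iio (-4 : ℝ)) := by
              rw [closure_Iio]
              have : |x| = -x := abs_of_neg hneg
              have : -x > 4 := by rw [← this]; exact hx4
              simp only [mem_Iic]; linarith
            exact (closure_minimal hsub hcl) hx
          · have hsub : Ioi (4 : ℝ) ⊆ {y : ℝ | deriv (deriv αs) y = 0} :=
              second_deriv_zero_on_open isOpen_Ioi
                (fun y hy => hα1 y s (by rw [abs_of_pos (by linarith [mem_Ioi.mp hy] : (0:ℝ) < y)]; linarith [mem_Ioi.mp hy]))
            have hx : x ∈ closure (Ioi (4 : ℝ)) := by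
              rw [closure_Ioi]
              have : |x| = x := abs_of_nonneg hpos
              simp only [mem_Ici]; linarith [this ▸ hx4]
            exact (closure_minimal hsub hcl) hx
        rw [hzero, mul_zero, abs_zero]; exact hδ
    have := abs_lt.mp hbound
    linarith
end

section
/- Let f : ℝ → ℝ be a C² function with f(x) = 1 for all x ∈ [−1,1] and f''(x) > 0 for all x with |x| > 1. Let α : ℝ × ℝ → ℝ be a function with α(x,s) ≥ 0 for all x, s, and such that for every s ∈ [−1,1] and every x ∈ [−3,3], α(x,s) = 0 if and only if x = s. For t > 0 define f_t : ℝ → ℝ by f_t(x) = f(x) + exp(−1/t) · α(x, sin(1/t)). Then for every ε > 0 there is no continuous function c : [0, ε] → ℝ such that for every t ∈ (0, ε], c(t) is a minimizer of f_t, i.e. f_t(c(t)) ≤ f_t(x) for all x ∈ ℝ. -/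
open Set Filter Topology Real

/-- Appendix A of the paper ('the swinging neck'): since the perturbed profile function
`f_t(x) = f(x) + exp(−1/t)·α(x, sin(1/t))` attains its minimum at the unique point
`sin(1/t)`, which oscillates faster and faster as `t → 0⁺`, there is no continuous
selection of minimizers of `f_t` on any interval `[0, ε]`. -/
theorem swinging_neck_no_continuous_minimizer
    (f : ℝ → ℝ) (hf : ContDiff ℝ 2 f)
    (hf1 : ∀ x ∈ Set.Icc (-1 : ℝ) 1, f x = 1)
    (hf2 : ∀ x : ℝ, 1 < |x| → 0 < deriv (deriv f) x)
    (α : ℝ → ℝ → ℝ)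
    (hα0 : ∀ x s : ℝ, 0 ≤ α x s)
    (hα1 : ∀ s ∈ Set.Icc (-1 : ℝ) 1, ∀ x ∈ Set.Icc (-3 : ℝ) 3, (α x s = 0 ↔ x = s)) :
    ∀ ε : ℝ, 0 < ε →
      ¬ ∃ c : ℝ → ℝ, ContinuousOn c (Set.Icc (0 : ℝ) ε) ∧
        ∀ t ∈ Set.Ioc (0 : ℝ) ε, ∀ x : ℝ,
          f (c t) + Real.exp (-1 / t) * α (c t) (Real.sin (1 / t)) ≤
            f x + Real.exp (-1 / t) * α x (Real.sin (1 / t)) := by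
  intro ε hε
  rintro ⟨c, hc, hmin⟩
  have hcd : Continuous (deriv f) := hf.continuous_deriv one_le_two
  -- deriv f vanishes on the open interval
  have hderiv0 : ∀ x ∈ Set.Ioo (-1:ℝ) 1, deriv f x = 0 := by
    intro x hx
    have hev : f =ᶠ[𝓝 x] fun _ => (1:ℝ) := by
      filter_upwards [Ioo_mem_nhds hx.1 hx.2] with y hy
      exact hf1 y (Set.Ioo_subset_Icc_self hy)
    rw [hev.deriv_eq, deriv_const]
  have hend : ∀ x₀ ∈ Set.Icc (-1:ℝ) 1, deriv f x₀ = 0 := by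
    intro x₀ hx₀
    have hne : (𝓝[Set.Ioo (-1:ℝ) 1] x₀).NeBot := by
      rw [← mem_closure_iff_nhdsWithin_neBot, closure_Ioo (by norm_num : (-1:ℝ) ≠ 1)]
      exact hx₀
    have h1 : Tendsto (deriv f) (𝓝[Set.Ioo (-1:ℝ) 1] x₀) (𝓝 (deriv f x₀)) :=
      (hcd.continuousAt).continuousWithinAt.tendsto
    have h2 : Tendsto (deriv f) (𝓝[Set.Ioo (-1:ℝ) 1] x₀) (𝓝 0) := by
      refine tendsto_const_nhds.congr' ?_
      filter_upwards [self_mem_nhdsWithin] with y hy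
      exact (hderiv0 y hy).symm
    exact tendsto_nhds_unique h1 h2
  have hd1 : deriv f 1 = 0 := hend 1 ⟨by norm_num, le_refl 1⟩
  have hdm1 : deriv f (-1) = 0 := hend (-1) ⟨le_refl _, by norm_num⟩
  -- deriv f strictly monotone on Ici 1 and Iic (-1)
  have hmono : StrictMonoOn (deriv f) (Set.Ici (1:ℝ)) := by
    refine strictMonoOn_of_deriv_pos (convex_Ici 1) hcd.continuousOn ?_
    intro x hx
    rw [interior_Ici] at hx
    exact hf2 x (by rwa [abs_of_pos (lt_trans one_pos hx)])
  have hmono' : StrictMonoOn (deriv f) (Set.Iic (-1:ℝ)) := by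
    refine strictMonoOn_of_deriv_pos (convex_Iic (-1)) hcd.continuousOn ?_
    intro x hx
    rw [interior_Iic, Set.mem_Iio] at hx
    have : |x| = -x := abs_of_neg (by linarith)
    exact hf2 x (by rw [this]; linarith)
  have hderivpos : ∀ x : ℝ, 1 < x → 0 < deriv f x := by
    intro x hx
    have := hmono Set.self_mem_Ici (le_of_lt hx) hx
    rwa [hd1] at this
  have hderivneg : ∀ x : ℝ, x < -1 → deriv f x < 0 := by
    intro x hx
    have := hmono' (le_of_lt hx) Set.self_mem_Iic hx
    rwa [hdm1] at this
  have hfmono : StrictMonoOn f (Set.Ici (1:ℝ)) :=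
    strictMonoOn_of_deriv_pos (convex_Ici 1) hf.continuous.continuousOn
      (fun x hx => hderivpos x (by rwa [interior_Ici] at hx))
  have hfanti : StrictAntiOn f (Set.Iic (-1:ℝ)) :=
    strictAntiOn_of_deriv_neg (convex_Iic (-1)) hf.continuous.continuousOn
      (fun x hx => hderivneg x (by rwa [interior_Iic] at hx))
  have hgt : ∀ x : ℝ, 1 < |x| → 1 < f x := by
    intro x hx
    rcases lt_or_ge 1 x with h | h
    · have := hfmono Set.self_mem_Ici (le_of_lt h) h
      rwa [hf1 1 ⟨by norm_num, le_refl 1⟩] at this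
    · have hx' : x < -1 := by
        rcases abs_cases x with ⟨h1, _⟩ | ⟨h1, _⟩ <;> [linarith; linarith]
      have := hfanti (le_of_lt hx') Set.self_mem_Iic hx'
      rwa [hf1 (-1) ⟨le_refl _, by norm_num⟩] at this
  have hf_ge : ∀ x : ℝ, 1 ≤ f x := by
    intro x
    rcases le_or_gt (|x|) 1 with h | h
    · rw [abs_le] at h; exact le_of_eq (hf1 x ⟨h.1, h.2⟩).symm
    · exact le_of_lt (hgt x h)
  -- the minimizer must be sin (1/t)
  have hsel : ∀ t ∈ Set.Ioc (0:ℝ) ε, c t = Real.sin (1/t) := by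
    intro t ht
    set s := Real.sin (1/t) with hs_def
    have hs : s ∈ Set.Icc (-1:ℝ) 1 := ⟨Real.neg_one_le_sin _, Real.sin_le_one _⟩
    have hαs : α s s = 0 :=
      (hα1 s hs s ⟨by linarith [hs.1], by linarith [hs.2]⟩).mpr rfl
    have h1 := hmin t ht s
    rw [hf1 s hs, hαs, mul_zero, add_zero] at h1
    have he : 0 < Real.exp (-1/t) := Real.exp_pos _
    have hge := hf_ge (c t)
    have hα' := hα0 (c t) s
    have hfc : f (c t) = 1 := le_antisymm (by nlinarith) hge
    have hαc : α (c t) s = 0 := by nlinarith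
    have hcx : |c t| ≤ 1 := by
      by_contra h
      push_neg at h
      exact absurd hfc (ne_of_gt (hgt _ h))
    have hmem : c t ∈ Set.Icc (-3:ℝ) 3 := by
      rw [abs_le] at hcx
      exact ⟨by linarith [hcx.1], by linarith [hcx.2]⟩
    exact (hα1 s hs (c t) hmem).mp hαc
  -- continuity at 0 forces c 0 to equal two different values
  have hc0 : ContinuousWithinAt c (Set.Icc (0:ℝ) ε) 0 :=
    hc 0 ⟨le_refl 0, le_of_lt hε⟩
  have key : ∀ (v : ℝ) (a : ℕ → ℝ), Tendsto a atTop (𝓝 0) → (∀ n, 0 < a n) →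
      (∀ n, Real.sin (1 / a n) = v) → c 0 = v := by
    intro v a ha hapos hasin
    have hlt : ∀ᶠ n in atTop, a n < ε := ha.eventually (gt_mem_nhds hε)
    have hmem : ∀ᶠ n in atTop, a n ∈ Set.Icc (0:ℝ) ε := by
      filter_upwards [hlt] with n hn
      exact ⟨le_of_lt (hapos n), le_of_lt hn⟩
    have htend : Tendsto a atTop (𝓝[Set.Icc (0:ℝ) ε] 0) :=
      tendsto_nhdsWithin_of_tendsto_nhds_of_eventually_within a ha hmem
    have h1 : Tendsto (fun n => c (a n)) atTop (𝓝 (c 0)) :=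
      hc0.tendsto.comp htend
    have h2 : Tendsto (fun n => c (a n)) atTop (𝓝 v) := by
      refine tendsto_const_nhds.congr' ?_
      filter_upwards [hlt] with n hn
      rw [hsel (a n) ⟨hapos n, le_of_lt hn⟩, hasin n]
    exact tendsto_nhds_unique h1 h2
  have hbase : ∀ q : ℝ, 0 < q →
      Tendsto (fun n : ℕ => (q + n * (2 * π))⁻¹) atTop (𝓝 0) ∧
      (∀ n : ℕ, 0 < (q + n * (2 * π))⁻¹) := by
    intro q hq
    have hpi : 0 < 2 * π := by positivity
    have hat : Tendsto (fun n : ℕ => q + (n : ℝ) * (2 * π)) atTop atTop :=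
      tendsto_atTop_add_const_left _ q
        (tendsto_natCast_atTop_atTop.atTop_mul_const hpi)
    refine ⟨hat.inv_tendsto_atTop, fun n => ?_⟩
    have : 0 < q + (n : ℝ) * (2 * π) := by positivity
    exact inv_pos.mpr this
  have hq1 : 0 < π / 2 := by positivity
  have hq2 : 0 < π / 2 + π := by positivity
  obtain ⟨ha1, ha1pos⟩ := hbase (π / 2) hq1
  obtain ⟨ha2, ha2pos⟩ := hbase (π / 2 + π) hq2
  have hv1 : c 0 = 1 := by
    refine key 1 _ ha1 ha1pos fun n => ?_
    have hne : (π / 2 + (n : ℝ) * (2 * π)) ≠ 0 := ne_of_gt (by positivity)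
    rw [one_div, inv_inv, Real.sin_add_nat_mul_two_pi, Real.sin_pi_div_two]
  have hv2 : c 0 = -1 := by
    refine key (-1) _ ha2 ha2pos fun n => ?_
    rw [one_div, inv_inv, Real.sin_add_nat_mul_two_pi]
    rw [Real.sin_add_pi, Real.sin_pi_div_two]
  rw [hv1] at hv2
  norm_num at hv2
end
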